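/- Let F be a finite field of cardinality q, m a positive integer coprime to q, λ a nonzero element of F, and f ∈ F[X] a monic divisor of X^m − λ with deg f < m. Let K be a field extension of F containing a primitive n-th root of unity ζ, where n is a positive integer coprime to q, and let T ⊆ ZMod n be such that the image of f in K[X] equals ∏_{γ ∈ T}(X − ζ^{γ̃}). Suppose d is a positive divisor of n whose image in ZMod n satisfies d + T = T. Then the λ-constacyclic code of length m generated by f contains a nonzero codeword of Hamming weight at most |T|·d/n + 1; concretely, there exists a nonzero polynomial g ∈ F[X] with f ∣ g, deg g < m, and g has at most |T|·d/n + 1 nonzero coefficients. Consequently the Hamming distance of the code satisfies d_H ≤ |T|·d/n + 1. -/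
import Mathlib


open Polynomial

private lemma coeff_comp_C_mul_X_aux {R : Type*} [CommRing R] (p : R[X]) (a : R) (i : ℕ) :
    (p.comp (C a * X)).coeff i = a ^ i * p.coeff i := by
  induction p using Polynomial.induction_on' with
  | add p q hp hq => simp [add_comp, hp, hq, mul_add]
  | monomial k c =>
    simp only [monomial_comp, mul_pow, ← C_pow, coeff_C_mul, coeff_X_pow, coeff_monomial]
    rcases eq_or_ne k i with rfl | h
    · simp [mul_comm]
    · simp [h, Ne.symm h]

/-- Let `F` be a finite field of cardinality `q`, `m` positive coprime to `q`,
`lam ≠ 0` in `F`, and `f` a monic divisor of `X^m - lam` with `deg f < m`. Let `K ⊇ F` contain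
a primitive `n`-th root of unity `ζ` (`n` coprime to `q`), and let `T ⊆ ZMod n` be the
defining set of `f`, i.e. the image of `f` in `K[X]` equals `∏_{γ ∈ T}(X - ζ^γ̃)`. If `d` is a
positive divisor of `n` whose image stabilizes `T`, then the `lam`-constacyclic code of length
`m` generated by `f` contains a nonzero codeword of Hamming weight at most `|T|·d/n + 1`:
there is a nonzero `g ∈ F[X]` with `f ∣ g`, `deg g < m`, and at most `|T|·d/n + 1` nonzero
coefficients. -/
theorem constacyclic_code_low_weight_codeword {F K : Type*} [Field F] [Fintype F]
    [Field K] [Algebra F K] (q : ℕ) (hq : Fintype.card F = q)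
    (m : ℕ) (hm : 0 < m) (hmq : Nat.Coprime m q)
    (lam : F) (hlam : lam ≠ 0)
    (f : F[X]) (hmon : f.Monic) (hdvd : f ∣ (X ^ m - C lam)) (hdeg : f.natDegree < m)
    (n : ℕ) (hn : 0 < n) (hnq : Nat.Coprime n q)
    (ζ : K) (hζ : IsPrimitiveRoot ζ n)
    (T : Finset (ZMod n))
    (hTf : f.map (algebraMap F K) = ∏ γ ∈ T, (X - C (ζ ^ γ.val)))
    (d : ℕ) (hd : 0 < d) (hdn : d ∣ n)
    (hstab : (((d : ZMod n)) + ·) '' (T : Set (ZMod n)) = (T : Set (ZMod n))) :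
    ∃ g : F[X], g ≠ 0 ∧ f ∣ g ∧ g.natDegree < m ∧
      g.support.card ≤ T.card * d / n + 1 := by
  haveI : NeZero n := ⟨hn.ne'⟩
  set e := n / d with he_def
  have hne : n = d * e := (Nat.mul_div_cancel' hdn).symm
  have he : 0 < e := Nat.div_pos (Nat.le_of_dvd hn hdn) hd
  set N := T.card with hN_def
  set χ : ZMod n → K := fun a => ζ ^ a.val with hχ_def
  have hζ1 : ζ ^ n = 1 := hζ.pow_eq_one
  have hχadd : ∀ a b : ZMod n, χ (a + b) = χ a * χ b := by
    intro a b
    have : (a + b).val = (a.val + b.val) % n := ZMod.val_add a b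
    rw [hχ_def]
    simp only
    rw [this, ← pow_eq_pow_mod _ hζ1, pow_add]
  have hχnat : ∀ k : ℕ, χ (k : ZMod n) = ζ ^ k := by
    intro k
    rw [hχ_def]
    simp only
    rw [ZMod.val_natCast, ← pow_eq_pow_mod _ hζ1]
  set η := ζ ^ d with hη_def
  have hη : IsPrimitiveRoot η e := hζ.pow hn hne
  -- membership facts
  have hmem2 : ∀ γ ∈ T, γ + (d : ZMod n) ∈ T := by
    intro γ hγ
    have : (d : ZMod n) + γ ∈ ((d : ZMod n) + ·) '' (T : Set (ZMod n)) :=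
      Set.mem_image_of_mem _ hγ
    rw [hstab] at this
    simpa [add_comm] using this
  have hmem1 : ∀ γ ∈ T, γ - (d : ZMod n) ∈ T := by
    intro γ hγ
    have : γ ∈ ((d : ZMod n) + ·) '' (T : Set (ZMod n)) := by rw [hstab]; exact hγ
    obtain ⟨t, ht, hteq⟩ := this
    have : γ - (d : ZMod n) = t := by rw [← hteq]; ring
    rw [this]; exact ht
  -- reindexing
  have reindex : ∏ γ ∈ T, (X - C (χ (γ - (d : ZMod n)))) = ∏ γ ∈ T, (X - C (χ γ)) := by
    refine Finset.prod_nbij' (fun γ => γ - (d : ZMod n)) (fun γ => γ + (d : ZMod n))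
      hmem1 hmem2 (fun a _ => by ring) (fun a _ => by ring) (fun a _ => rfl)
  -- key identity
  have hcomp : (f.map (algebraMap F K)).comp (C η * X) = C (η ^ N) * f.map (algebraMap F K) := by
    rw [hTf, prod_comp]
    simp only [sub_comp, X_comp, C_comp]
    have hfac : ∀ γ ∈ T, C η * X - C (ζ ^ γ.val) = C η * (X - C (χ (γ - (d : ZMod n)))) := by
      intro γ _
      rw [mul_sub, ← C_mul]
      have : η * χ (γ - (d : ZMod n)) = χ γ := by
        rw [hη_def, ← hχnat d, ← hχadd]
        congr 1
        ring
      rw [this]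
    rw [Finset.prod_congr rfl hfac, Finset.prod_mul_distrib, Finset.prod_const, reindex,
      ← C_pow]
  -- coefficient relation
  have hrel : ∀ i : ℕ, (f.map (algebraMap F K)).coeff i ≠ 0 → η ^ i = η ^ N := by
    intro i hi
    have h1 : ((f.map (algebraMap F K)).comp (C η * X)).coeff i
        = η ^ i * (f.map (algebraMap F K)).coeff i := coeff_comp_C_mul_X_aux _ η i
    have h2 : ((f.map (algebraMap F K)).comp (C η * X)).coeff i
        = η ^ N * (f.map (algebraMap F K)).coeff i := by
      rw [hcomp, coeff_C_mul]
    exact mul_right_cancel₀ hi (h1.symm.trans h2)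
  -- constant coefficient nonzero
  have hζne : ζ ≠ 0 := hζ.ne_zero hn.ne'
  have hc0 : (f.map (algebraMap F K)).coeff 0 ≠ 0 := by
    rw [hTf, coeff_zero_eq_eval_zero, eval_prod]
    refine Finset.prod_ne_zero_iff.mpr fun γ _ => ?_
    simp only [eval_sub, eval_X, eval_C, zero_sub, neg_ne_zero]
    exact pow_ne_zero _ hζne
  have hηN : η ^ N = 1 := by
    have := hrel 0 hc0
    simpa using this.symm
  -- divisibility of support indices
  have hsupp_dvd : ∀ i ∈ f.support, e ∣ i := by
    intro i hi
    have hfi : f.coeff i ≠ 0 := mem_support_iff.mp hi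
    have hPi : (f.map (algebraMap F K)).coeff i ≠ 0 := by
      rw [coeff_map]
      exact fun h => hfi ((_root_.map_eq_zero (algebraMap F K)).mp h)
    have : η ^ i = 1 := (hrel i hPi).trans hηN
    exact (hη.pow_eq_one_iff_dvd i).mp this
  -- degree
  have hdegP : (f.map (algebraMap F K)).natDegree = N := by
    rw [hTf, natDegree_prod_of_monic _ _ (fun γ _ => monic_X_sub_C _)]
    simp only [natDegree_X_sub_C, Finset.sum_const, smul_eq_mul, mul_one, hN_def]
  have hdegf : f.natDegree = N := (hmon.natDegree_map (algebraMap F K)).symm.trans hdegP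
  -- support cardinality
  have hsub : f.support ⊆ (Finset.range (N / e + 1)).image (e * ·) := by
    intro i hi
    obtain ⟨j, rfl⟩ := hsupp_dvd i hi
    refine Finset.mem_image.mpr ⟨j, Finset.mem_range.mpr ?_, rfl⟩
    have hle : e * j ≤ N := hdegf ▸ le_natDegree_of_ne_zero (mem_support_iff.mp hi)
    have : j ≤ N / e := Nat.le_div_iff_mul_le he |>.mpr (by linarith [hle])
    omega
  have hcard : f.support.card ≤ N / e + 1 := by
    calc f.support.card ≤ ((Finset.range (N / e + 1)).image (e * ·)).card :=
          Finset.card_le_card hsub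
      _ ≤ (Finset.range (N / e + 1)).card := Finset.card_image_le
      _ = N / e + 1 := Finset.card_range _
  have hdiv : N * d / n = N / e := by
    rw [hne, mul_comm N d, Nat.mul_div_mul_left _ _ hd]
  exact ⟨f, hmon.ne_zero, dvd_refl f, hdeg, by rw [hdiv]; exact hcard⟩
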